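/- For holomorphic f₁, f₂ with nonvanishing derivatives, (B_{S(f₁)}[F,G])∘f₂ = B_{S(f₁∘f₂)}[(F∘f₂)/f₂', (G∘f₂)/f₂']. -/

import Mathlib

/-- The bilinear form `B_q[F,G] = F''G + FG'' − F'G' + 2qFG`. -/
noncomputable def Bform (q F G : ℂ → ℂ) (z : ℂ) : ℂ :=
  deriv (deriv F) z * G z + F z * deriv (deriv G) z
    - deriv F z * deriv G z + 2 * q z * F z * G z

/-- The Schwarzian derivative `S(f) = f'''/f' - (3/2)(f''/f')²`. -/
noncomputable def schwarzian (f : ℂ → ℂ) (z : ℂ) : ℂ :=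
  deriv (deriv (deriv f)) z / deriv f z - (3/2) * (deriv (deriv f) z / deriv f z) ^ 2

/-- The derivative of an entire function is entire. -/
lemma entire_deriv {f : ℂ → ℂ} (hf : Differentiable ℂ f) : Differentiable ℂ (deriv f) := by
  rw [← Complex.analyticOnNhd_univ_iff_differentiable] at hf ⊢
  exact hf.deriv

/-- Pointwise chain rule in `HasDerivAt` form. -/
lemma hasDerivAt_comp' {f g : ℂ → ℂ} (w : ℂ) (hf : Differentiable ℂ f)
    (hg : Differentiable ℂ g) :
    HasDerivAt (fun z => f (g z)) (deriv f (g w) * deriv g w) w :=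
  ((hf (g w)).hasDerivAt).comp w ((hg w).hasDerivAt)

/-- Chain rule as a function equality. -/
lemma deriv_comp_fun {f g : ℂ → ℂ} (hf : Differentiable ℂ f) (hg : Differentiable ℂ g) :
    deriv (fun z => f (g z)) = fun z => deriv f (g z) * deriv g z :=
  funext fun z => (hasDerivAt_comp' z hf hg).deriv

set_option maxHeartbeats 1000000 in
/-- `(B_{S(f₁)}[F,G]) ∘ f₂ = B_{S(f₁∘f₂)}[(F∘f₂)/f₂', (G∘f₂)/f₂']`. -/
theorem Bform_composition (f₁ f₂ F G : ℂ → ℂ)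
    (hf₁ : Differentiable ℂ f₁) (hf₁' : ∀ z, deriv f₁ z ≠ 0)
    (hf₂ : Differentiable ℂ f₂) (hf₂' : ∀ z, deriv f₂ z ≠ 0)
    (hF : Differentiable ℂ F) (hG : Differentiable ℂ G) :
    ∀ z, Bform (schwarzian f₁) F G (f₂ z)
      = Bform (schwarzian (f₁ ∘ f₂))
          (fun w => F (f₂ w) / deriv f₂ w) (fun w => G (f₂ w) / deriv f₂ w) z := by
  intro z
  -- higher derivatives are entire
  have hf₁d := entire_deriv hf₁
  have hf₁dd := entire_deriv hf₁d
  have hf₁ddd := entire_deriv hf₁dd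
  have hf₂d := entire_deriv hf₂
  have hf₂dd := entire_deriv hf₂d
  -- derivatives of the composition f₁ ∘ f₂
  have E1 : deriv (f₁ ∘ f₂) = fun w => deriv f₁ (f₂ w) * deriv f₂ w :=
    deriv_comp_fun hf₁ hf₂
  have E2 : deriv (fun w => deriv f₁ (f₂ w) * deriv f₂ w)
      = fun w => deriv (deriv f₁) (f₂ w) * deriv f₂ w * deriv f₂ w
          + deriv f₁ (f₂ w) * deriv (deriv f₂) w := by
    funext w
    exact (((hasDerivAt_comp' w hf₁d hf₂).mul ((hf₂d w).hasDerivAt))).deriv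
  have E3 : deriv (fun w => deriv (deriv f₁) (f₂ w) * deriv f₂ w * deriv f₂ w
          + deriv f₁ (f₂ w) * deriv (deriv f₂) w) z
      = ((deriv (deriv (deriv f₁)) (f₂ z) * deriv f₂ z * deriv f₂ z
            + deriv (deriv f₁) (f₂ z) * deriv (deriv f₂) z) * deriv f₂ z
          + deriv (deriv f₁) (f₂ z) * deriv f₂ z * deriv (deriv f₂) z)
          + (deriv (deriv f₁) (f₂ z) * deriv f₂ z * deriv (deriv f₂) z
            + deriv f₁ (f₂ z) * deriv (deriv (deriv f₂)) z) := by
    have h1 : HasDerivAt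
        (fun w => deriv (deriv f₁) (f₂ w) * deriv f₂ w * deriv f₂ w)
        ((deriv (deriv (deriv f₁)) (f₂ z) * deriv f₂ z * deriv f₂ z
            + deriv (deriv f₁) (f₂ z) * deriv (deriv f₂) z) * deriv f₂ z
          + deriv (deriv f₁) (f₂ z) * deriv f₂ z * deriv (deriv f₂) z) z :=
      ((hasDerivAt_comp' z hf₁dd hf₂).mul ((hf₂d z).hasDerivAt)).mul ((hf₂d z).hasDerivAt)
    have h2 : HasDerivAt
        (fun w => deriv f₁ (f₂ w) * deriv (deriv f₂) w)
        (deriv (deriv f₁) (f₂ z) * deriv f₂ z * deriv (deriv f₂) z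
          + deriv f₁ (f₂ z) * deriv (deriv (deriv f₂)) z) z :=
      (hasDerivAt_comp' z hf₁d hf₂).mul ((hf₂dd z).hasDerivAt)
    exact (h1.add h2).deriv
  -- first derivative of H = (F ∘ f₂) / f₂'
  have DH : ∀ (F : ℂ → ℂ), Differentiable ℂ F →
      deriv (fun w => F (f₂ w) / deriv f₂ w)
        = fun w => (deriv F (f₂ w) * deriv f₂ w * deriv f₂ w
            - F (f₂ w) * deriv (deriv f₂) w) / deriv f₂ w ^ 2 := by
    intro F hF
    funext w
    have h := (hasDerivAt_comp' w hF hf₂).div ((hf₂d w).hasDerivAt) (hf₂' w)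
    exact h.deriv
  -- second derivative of H at z
  have DH2 : ∀ (F : ℂ → ℂ), (hF : Differentiable ℂ F) →
      deriv (fun w => (deriv F (f₂ w) * deriv f₂ w * deriv f₂ w
            - F (f₂ w) * deriv (deriv f₂) w) / deriv f₂ w ^ 2) z
        = ((((deriv (deriv F) (f₂ z) * deriv f₂ z * deriv f₂ z
              + deriv F (f₂ z) * deriv (deriv f₂) z) * deriv f₂ z
            + deriv F (f₂ z) * deriv f₂ z * deriv (deriv f₂) z)
            - (deriv F (f₂ z) * deriv f₂ z * deriv (deriv f₂) z
              + F (f₂ z) * deriv (deriv (deriv f₂)) z))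
            * deriv f₂ z ^ 2
          - (deriv F (f₂ z) * deriv f₂ z * deriv f₂ z - F (f₂ z) * deriv (deriv f₂) z)
            * ((2 : ℕ) * deriv f₂ z ^ 1 * deriv (deriv f₂) z))
          / (deriv f₂ z ^ 2) ^ 2 := by
    intro F hF
    have hFd := entire_deriv hF
    have hnum : HasDerivAt
        (fun w => deriv F (f₂ w) * deriv f₂ w * deriv f₂ w - F (f₂ w) * deriv (deriv f₂) w)
        (((deriv (deriv F) (f₂ z) * deriv f₂ z * deriv f₂ z
              + deriv F (f₂ z) * deriv (deriv f₂) z) * deriv f₂ z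
            + deriv F (f₂ z) * deriv f₂ z * deriv (deriv f₂) z)
          - (deriv F (f₂ z) * deriv f₂ z * deriv (deriv f₂) z
            + F (f₂ z) * deriv (deriv (deriv f₂)) z)) z := by
      have h1 := ((hasDerivAt_comp' z hFd hf₂).mul ((hf₂d z).hasDerivAt)).mul
        ((hf₂d z).hasDerivAt)
      have h2 := (hasDerivAt_comp' z hF hf₂).mul ((hf₂dd z).hasDerivAt)
      exact h1.sub h2
    have hden : HasDerivAt (fun w => deriv f₂ w ^ 2)
        ((2 : ℕ) * deriv f₂ z ^ 1 * deriv (deriv f₂) z) z :=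
      ((hf₂d z).hasDerivAt).pow 2
    exact (hnum.div hden (pow_ne_zero 2 (hf₂' z))).deriv
  have hu := hf₂' z
  have hb := hf₁' (f₂ z)
  -- Schwarzian chain rule
  have SC : schwarzian (f₁ ∘ f₂) z
      = schwarzian f₁ (f₂ z) * (deriv f₂ z) ^ 2 + schwarzian f₂ z := by
    simp only [schwarzian, E1, E2, E3]
    field_simp
    have hK : deriv f₂ z ^ 3 * deriv f₁ (f₂ z) ^ 3 * (deriv f₂ z)⁻¹ ^ 3
        * (deriv f₁ (f₂ z))⁻¹ ^ 3 = 1 := by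
      field_simp
    ring
  simp only [Bform, SC, DH F hF, DH G hG, DH2 F hF, DH2 G hG]
  generalize schwarzian f₁ (f₂ z) = s
  simp only [schwarzian]
  ring_nf
  field_simp
  have h35 : deriv f₂ z ^ 35 * (deriv f₂ z)⁻¹ ^ 35 = 1 := by
    rw [← mul_pow, mul_inv_cancel₀ hu, one_pow]
  have h18 : deriv f₂ z ^ 18 * (deriv f₂ z)⁻¹ ^ 18 = 1 := by
    rw [← mul_pow, mul_inv_cancel₀ hu, one_pow]
  ring
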